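/- Let m ≥ 1 and let b_1,…,b_m be real numbers. Then the set { (β(k+1) − β(k))/2 : 1 ≤ k ≤ 2^m − 1 } equals { b_m } ∪ { b_i − Σ_{j=i+1}^m b_j : 1 ≤ i ≤ m − 1 }. -/

import Mathlib

open Finset

/-- τ_i(k): the i-th binary digit of k−1, i.e. k − 1 = Σ_{i=1}^m τ_i(k)·2^{m−i}. -/
def tauD (m k i : ℕ) : ℕ := ((k - 1) / 2 ^ (m - i)) % 2

/-- β(k) = Σ_{i=1}^m (−1)^{1−τ_i(k)} b_i. -/
noncomputable def betaD (m : ℕ) (b : ℕ → ℝ) (k : ℕ) : ℝ :=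
  ∑ i ∈ Finset.Icc 1 m, (if tauD m k i = 1 then b i else -b i)

lemma pred_div_aux (d A : ℕ) (hd : 0 < d) (hA : 0 < A) : (d * A - 1) / d = A - 1 := by
  obtain ⟨A', rfl⟩ : ∃ A', A = A' + 1 := ⟨A - 1, by omega⟩
  have h1 : d * (A' + 1) - 1 = d * A' + (d - 1) := by
    rw [Nat.mul_add, Nat.mul_one]; omega
  rw [h1, Nat.mul_add_div hd, Nat.div_eq_of_lt (by omega)]
  omega

lemma diff_eq (m t u : ℕ) (b : ℕ → ℝ) (ht : t < m) (hu : Odd u) :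
    (betaD m b (2 ^ t * u + 1) - betaD m b (2 ^ t * u)) / 2
      = b (m - t) - ∑ j ∈ Finset.Icc (m - t + 1) m, b j := by
  obtain ⟨r, hr⟩ := hu
  have hu1 : 1 ≤ u := by omega
  have h2t : 0 < 2 ^ t := Nat.two_pow_pos t
  set k := 2 ^ t * u with hk
  have hk1 : 1 ≤ k := Nat.mul_pos h2t (by omega)
  have key : betaD m b (k + 1) - betaD m b k
      = ∑ i ∈ Finset.Icc 1 m,
          (if i = m - t then 2 * b i else if m - t < i then -2 * b i else 0) := by
    unfold betaD
    rw [← Finset.sum_sub_distrib]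
    apply Finset.sum_congr rfl
    intro i hi
    simp only [Finset.mem_Icc] at hi
    have htau1 : tauD m (k + 1) i = (k / 2 ^ (m - i)) % 2 := by
      simp [tauD]
    rcases lt_trichotomy (m - i) t with hjt | hjt | hjt
    · -- m - i < t : i > m - t, digit flips 1 → 0
      have him : m - t < i := by omega
      have hine : i ≠ m - t := by omega
      have hsplit : 2 ^ t = 2 ^ (m - i) * 2 ^ (t - (m - i)) := by
        rw [← pow_add]; congr 1; omega
      have hkj : k = 2 ^ (m - i) * (2 ^ (t - (m - i)) * u) := by
        rw [hk, hsplit]; ring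
      have h2j : 0 < 2 ^ (m - i) := Nat.two_pow_pos _
      have hdiv1 : k / 2 ^ (m - i) = 2 ^ (t - (m - i)) * u := by
        rw [hkj, Nat.mul_div_cancel_left _ h2j]
      have heven : 2 ∣ 2 ^ (t - (m - i)) * u :=
        (dvd_pow_self 2 (by omega : t - (m - i) ≠ 0)).mul_right u
      have h1 : tauD m (k + 1) i = 0 := by
        rw [htau1, hdiv1]; omega
      have hdiv2 : (k - 1) / 2 ^ (m - i) = 2 ^ (t - (m - i)) * u - 1 := by
        rw [hkj]
        exact pred_div_aux _ _ h2j (Nat.mul_pos (Nat.two_pow_pos _) (by omega))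
      have h2 : tauD m k i = 1 := by
        have h2le : 2 ≤ 2 ^ (t - (m - i)) * u := by
          obtain ⟨c, hc⟩ := heven
          have : 0 < 2 ^ (t - (m - i)) * u :=
            Nat.mul_pos (Nat.two_pow_pos _) (by omega)
          omega
        simp only [tauD, hdiv2]
        omega
      rw [h1, h2]
      simp [hine, him]
      ring
    · -- m - i = t : digit flips 0 → 1
      have hieq : i = m - t := by omega
      have hdiv1 : k / 2 ^ (m - i) = u := by
        rw [hjt, hk, Nat.mul_div_cancel_left _ h2t]
      have hdiv2 : (k - 1) / 2 ^ (m - i) = u - 1 := by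
        rw [hjt, hk]
        exact pred_div_aux _ _ h2t (by omega)
      have h1 : tauD m (k + 1) i = 1 := by
        rw [htau1, hdiv1]; omega
      have h2 : tauD m k i = 0 := by
        simp only [tauD, hdiv2]; omega
      rw [h1, h2, if_pos hieq]
      norm_num
      ring
    · -- m - i > t : digits agree
      have him : i < m - t := by omega
      have hndvd : ¬ 2 ^ (m - i) ∣ k := by
        intro hdvd
        have h2t1 : 2 ^ t * 2 ∣ 2 ^ t * u := by
          calc 2 ^ t * 2 = 2 ^ (t + 1) := by ring
          _ ∣ 2 ^ (m - i) := pow_dvd_pow 2 (by omega)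
          _ ∣ k := hdvd
        have : (2 : ℕ) ∣ u := (Nat.mul_dvd_mul_iff_left h2t).mp h2t1
        omega
      have hkk : k - 1 + 1 = k := by omega
      have heq : k / 2 ^ (m - i) = (k - 1) / 2 ^ (m - i) := by
        conv_lhs => rw [← hkk]
        rw [Nat.succ_div, if_neg (by rwa [hkk]), add_zero]
      have h1 : tauD m (k + 1) i = tauD m k i := by
        rw [htau1]; simp only [tauD, heq]
      rw [h1, sub_self, if_neg (by omega), if_neg (by omega)]
  rw [key]
  have hmt1 : 1 ≤ m - t := by omega
  have hsplit : ∑ i ∈ Finset.Icc 1 m,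
      (if i = m - t then 2 * b i else if m - t < i then -2 * b i else 0)
      = (∑ i ∈ Finset.Ioc 0 (m - t),
          (if i = m - t then 2 * b i else if m - t < i then -2 * b i else 0))
        + ∑ i ∈ Finset.Ioc (m - t) m,
          (if i = m - t then 2 * b i else if m - t < i then -2 * b i else 0) := by
    rw [Finset.sum_Ioc_consecutive _ (by omega) (by omega)]
    congr 1
  rw [hsplit]
  have hfirst : (∑ i ∈ Finset.Ioc 0 (m - t),
      (if i = m - t then 2 * b i else if m - t < i then -2 * b i else 0)) = 2 * b (m - t) := by
    rw [Finset.sum_eq_single (m - t)]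
    · simp
    · intro x hx hne
      simp only [Finset.mem_Ioc] at hx
      rw [if_neg hne, if_neg (by omega)]
    · intro h
      exact absurd (Finset.mem_Ioc.mpr ⟨by omega, le_refl _⟩) h
  have hsecond : (∑ i ∈ Finset.Ioc (m - t) m,
      (if i = m - t then 2 * b i else if m - t < i then -2 * b i else 0))
      = -2 * ∑ j ∈ Finset.Icc (m - t + 1) m, b j := by
    rw [Finset.mul_sum]
    have hset : Finset.Ioc (m - t) m = Finset.Icc (m - t + 1) m := by
      ext x; simp [Finset.mem_Ioc, Finset.mem_Icc]
    rw [hset]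
    apply Finset.sum_congr rfl
    intro x hx
    simp only [Finset.mem_Icc] at hx
    rw [if_neg (by omega), if_pos (by omega)]
  rw [hfirst, hsecond]
  ring

theorem stmt_16 (m : ℕ) (hm : 1 ≤ m) (b : ℕ → ℝ) :
    {x : ℝ | ∃ k, 1 ≤ k ∧ k ≤ 2 ^ m - 1
        ∧ x = (betaD m b (k + 1) - betaD m b k) / 2}
      = {b m} ∪ {x : ℝ | ∃ i, 1 ≤ i ∧ i ≤ m - 1
          ∧ x = b i - ∑ j ∈ Finset.Icc (i + 1) m, b j} := by
  have h2m : 2 ≤ 2 ^ m := by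
    calc (2:ℕ) = 2 ^ 1 := (pow_one 2).symm
    _ ≤ 2 ^ m := Nat.pow_le_pow_right (by norm_num) hm
  ext x
  simp only [Set.mem_setOf_eq, Set.mem_union, Set.mem_singleton_iff]
  constructor
  · rintro ⟨k, hk1, hk2, rfl⟩
    obtain ⟨t, u, hu, hku⟩ := Nat.exists_eq_two_pow_mul_odd (show k ≠ 0 by omega)
    have ht : t < m := by
      by_contra h
      push_neg at h
      have h1 : 2 ^ m ≤ 2 ^ t := Nat.pow_le_pow_right (by norm_num) h
      have h2 : 2 ^ t ≤ k := by
        rw [hku]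
        exact Nat.le_mul_of_pos_right _ (by rcases hu with ⟨r, hr⟩; omega)
      omega
    subst hku
    rw [diff_eq m t u b ht hu]
    rcases Nat.eq_zero_or_pos t with rfl | htpos
    · left
      have : m - 0 = m := rfl
      rw [this]
      rw [Finset.Icc_eq_empty (by omega), Finset.sum_empty]
      ring
    · right
      exact ⟨m - t, by omega, by omega, rfl⟩
  · rintro (rfl | ⟨i, hi1, hi2, rfl⟩)
    · refine ⟨1, le_refl _, by omega, ?_⟩
      have := diff_eq m 0 1 b (by omega) ⟨0, rfl⟩
      simp only [pow_zero, one_mul] at this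
      rw [this, Nat.sub_zero, Finset.Icc_eq_empty (by omega), Finset.sum_empty]
      ring
    · refine ⟨2 ^ (m - i), Nat.one_le_two_pow, ?_, ?_⟩
      · have : 2 ^ (m - i) ≤ 2 ^ (m - 1) := Nat.pow_le_pow_right (by norm_num) (by omega)
        have h2 : 2 ^ (m - 1) * 2 = 2 ^ m := by
          rw [← pow_succ]; congr 1; omega
        have : 0 < 2 ^ (m - 1) := Nat.two_pow_pos _
        omega
      · have := diff_eq m (m - i) 1 b (by omega) ⟨0, rfl⟩
        simp only [mul_one] at this
        rw [this]
        have hmi : m - (m - i) = i := by omega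
        rw [hmi]
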